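/- For all nonnegative integers m and n, the following identity of rational functions in q holds: (−q)^{2mn} / ((q²;q²)_m (q²;q²)_n) = ∑_{d=0}^{min(m,n)} (−q)^{d²} · q^{−d} / ((q²;q²)_{m−d} (q²;q²)_{n−d} (q²;q²)_d). -/

import Mathlib

open Finset

namespace Stmt3Aux

variable {K : Type*} [Field K]

/-- `(q²;q²)_k` -/
def qa (q : K) (k : ℕ) : K := ∏ s ∈ range k, (1 - q ^ (2 * (s + 1)))

/-- `∏_{j<d} (1 - q^{2(n-j)})` -/
def qp (q : K) (n d : ℕ) : K := ∏ j ∈ range d, (1 - q ^ (2 * (n - j)))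

/-- q²-binomial coefficient (as element of K). -/
def qb (q : K) (m d : ℕ) : K := qp q m d / qa q d

def qc (q : K) (d : ℕ) : K := (-q) ^ (d ^ 2) * (q⁻¹) ^ d

def qS (q : K) (m n : ℕ) : K := ∑ d ∈ range (n + 1), qc q d * qb q m d * qp q n d

lemma qa_zero (q : K) : qa q 0 = 1 := by simp [qa]

lemma qa_succ (q : K) (k : ℕ) : qa q (k + 1) = qa q k * (1 - q ^ (2 * (k + 1))) :=
  prod_range_succ _ _

lemma qp_zero (q : K) (n : ℕ) : qp q n 0 = 1 := by simp [qp]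

lemma qp_succ (q : K) (n d : ℕ) : qp q n (d + 1) = qp q n d * (1 - q ^ (2 * (n - d))) :=
  prod_range_succ _ _

lemma qp_succ_left (q : K) (m d : ℕ) :
    qp q (m + 1) (d + 1) = (1 - q ^ (2 * (m + 1))) * qp q m d := by
  rw [qp, prod_range_succ']
  simp only [Nat.succ_sub_succ, Nat.sub_zero]
  rw [qp, mul_comm]

lemma qp_eq_zero (q : K) {m d : ℕ} (h : m < d) : qp q m d = 0 := by
  refine prod_eq_zero (mem_range.mpr h) ?_
  simp

section
variable {q : K} (hpoch : ∀ s : ℕ, 1 ≤ s → (1 : K) - q ^ (2 * s) ≠ 0)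
include hpoch

lemma qa_ne_zero (k : ℕ) : qa q k ≠ 0 := by
  rw [qa]
  exact prod_ne_zero_iff.mpr fun s _ => hpoch (s + 1) (by omega)

lemma qp_ne_zero {m d : ℕ} (h : d ≤ m) : qp q m d ≠ 0 := by
  rw [qp]
  refine prod_ne_zero_iff.mpr fun j hj => hpoch (m - j) ?_
  have := mem_range.mp hj; omega

lemma qa_split {m : ℕ} : ∀ d ≤ m, qa q m = qa q (m - d) * qp q m d := by
  intro d
  induction d with
  | zero => simp [qp_zero]
  | succ d ih =>
      intro hdm
      have hd : d ≤ m := by omega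
      rw [ih hd, qp_succ]
      obtain ⟨e, he⟩ : ∃ e, m - (d + 1) = e ∧ m - d = e + 1 := ⟨m - (d + 1), rfl, by omega⟩
      rw [he.1, he.2, qa_succ]
      have : e + 1 = m - d := he.2.symm ▸ rfl
      rw [this]
      ring

lemma qb_pascal (m d : ℕ) :
    qb q (m + 1) (d + 1) = q ^ (2 * (d + 1)) * qb q m (d + 1) + qb q m d := by
  have had : qa q d ≠ 0 := qa_ne_zero hpoch d
  have hfd : (1 : K) - q ^ (2 * (d + 1)) ≠ 0 := hpoch (d + 1) (by omega)
  rw [qb, qb, qb, qp_succ_left, qp_succ, qa_succ]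
  rcases le_or_gt d m with hdm | hdm
  · have hx : q ^ (2 * (d + 1)) * q ^ (2 * (m - d)) = q ^ (2 * (m + 1)) := by
      rw [← pow_add]; congr 1; omega
    rw [← hx]
    field_simp
    ring
  · rw [qp_eq_zero q hdm]
    simp

end

lemma qc_succ {q : K} (hq : q ≠ 0) (d : ℕ) :
    qc q (d + 1) = -(q ^ (2 * d)) * qc q d := by
  have h1 : (d + 1) ^ 2 = d ^ 2 + (2 * d + 1) := by ring
  rw [qc, qc, h1, pow_add, pow_add, pow_succ, pow_succ]
  have h2 : (-q : K) ^ (2 * d) = q ^ (2 * d) := Even.neg_pow (even_two_mul d) q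
  rw [h2]
  field_simp
  have hqq : q * q⁻¹ = 1 := mul_inv_cancel₀ hq
  linear_combination (-(q ^ d ^ 2 * q⁻¹ ^ d * (-1) ^ d ^ 2)) * hqq

lemma qS_zero (q : K) (n : ℕ) : qS q 0 n = 1 := by
  rw [qS, sum_range_succ']
  have h0 : ∀ d ∈ range n, qc q (d + 1) * qb q 0 (d + 1) * qp q n (d + 1) = 0 := by
    intro d _
    rw [qb, qp_eq_zero q (by omega : 0 < d + 1), zero_div, mul_zero, zero_mul]
  rw [sum_congr rfl h0, sum_const_zero, zero_add]
  simp [qc, qb, qp_zero, qa_zero]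

lemma qS_succ {q : K} (hq : q ≠ 0)
    (hpoch : ∀ s : ℕ, 1 ≤ s → (1 : K) - q ^ (2 * s) ≠ 0) (m n : ℕ) :
    qS q (m + 1) n = q ^ (2 * n) * qS q m n := by
  have hstep : ∀ d ∈ range n,
      qc q (d + 1) * qb q (m + 1) (d + 1) * qp q n (d + 1)
        = (q ^ (2 * (d + 1)) * (qc q (d + 1) * qb q m (d + 1) * qp q n (d + 1))
            - q ^ (2 * d) * (qc q d * qb q m d * qp q n d))
          + q ^ (2 * n) * (qc q d * qb q m d * qp q n d) := by
    intro d hd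
    have hdn : d < n := mem_range.mp hd
    have hx : q ^ (2 * d) * q ^ (2 * (n - d)) = q ^ (2 * n) := by
      rw [← pow_add]; congr 1; omega
    rw [qb_pascal hpoch, qc_succ hq, qp_succ]
    linear_combination (qc q d * qb q m d * qp q n d) * hx
  have h0 : qc q 0 * qb q (m + 1) 0 * qp q n 0 = 1 := by
    simp [qc, qb, qp_zero, qa_zero]
  have hg0 : qc q 0 * qb q m 0 * qp q n 0 = 1 := by
    simp [qc, qb, qp_zero, qa_zero]
  rw [qS, sum_range_succ', h0, sum_congr rfl hstep, sum_add_distrib,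
    sum_range_sub (fun d => q ^ (2 * d) * (qc q d * qb q m d * qp q n d)),
    ← mul_sum, qS, sum_range_succ, mul_add]
  linear_combination -hg0

lemma qS_eq {q : K} (hq : q ≠ 0)
    (hpoch : ∀ s : ℕ, 1 ≤ s → (1 : K) - q ^ (2 * s) ≠ 0) (m n : ℕ) :
    qS q m n = q ^ (2 * m * n) := by
  induction m with
  | zero => simp [qS_zero]
  | succ m ih =>
      rw [qS_succ hq hpoch, ih, ← pow_add]
      congr 1; ring

lemma final (q : K) (hq : q ≠ 0)
    (hpoch : ∀ s : ℕ, 1 ≤ s → (1 : K) - q ^ (2 * s) ≠ 0) (m n : ℕ) :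
    (-q) ^ (2 * m * n) / (qa q m * qa q n)
      = ∑ d ∈ range (min m n + 1), qc q d / (qa q (m - d) * qa q (n - d) * qa q d) := by
  have hneg : (-q : K) ^ (2 * m * n) = q ^ (2 * m * n) :=
    Even.neg_pow ⟨m * n, by ring⟩ q
  have hS : qS q m n = ∑ d ∈ range (min m n + 1), qc q d * qb q m d * qp q n d := by
    rw [qS]
    refine (sum_subset (range_subset_range.mpr (by omega)) ?_).symm
    intro x hx hx'
    have h1 : x < n + 1 := mem_range.mp hx
    have h2 : ¬ x < min m n + 1 := fun h => hx' (mem_range.mpr h)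
    have hmx : m < x := by omega
    rw [qb, qp_eq_zero q hmx, zero_div, mul_zero, zero_mul]
  rw [hneg, ← qS_eq hq hpoch, hS, sum_div]
  refine sum_congr rfl fun d hd => ?_
  have hdm : d ≤ m := by have := mem_range.mp hd; omega
  have hdn : d ≤ n := by have := mem_range.mp hd; omega
  rw [qb, qa_split hpoch d hdm, qa_split hpoch d hdn]
  have h1 := qa_ne_zero hpoch (m - d)
  have h2 := qa_ne_zero hpoch (n - d)
  have h3 := qa_ne_zero hpoch d
  have h4 := qp_ne_zero hpoch hdm
  have h5 := qp_ne_zero hpoch hdn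
  field_simp

end Stmt3Aux

/-- Coefficient-wise form of the simplest unlinking (multi-cover skein) relation:
`(-q)^{2mn}/((q²;q²)_m (q²;q²)_n)
  = ∑_{d=0}^{min(m,n)} (-q)^{d²} q^{-d} / ((q²;q²)_{m-d}(q²;q²)_{n-d}(q²;q²)_d)`. -/
theorem stmt_3 {K : Type*} [Field K] (q : K) (hq : q ≠ 0)
    (hpoch : ∀ s : ℕ, 1 ≤ s → (1 : K) - q ^ (2 * s) ≠ 0) (m n : ℕ) :
    (-q) ^ (2 * m * n) /
        ((∏ s ∈ Finset.range m, (1 - q ^ (2 * (s + 1)))) *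
          ∏ s ∈ Finset.range n, (1 - q ^ (2 * (s + 1)))) =
      ∑ d ∈ Finset.range (min m n + 1),
        (-q) ^ (d ^ 2) * (q⁻¹) ^ d /
          ((∏ s ∈ Finset.range (m - d), (1 - q ^ (2 * (s + 1)))) *
            (∏ s ∈ Finset.range (n - d), (1 - q ^ (2 * (s + 1)))) *
            ∏ s ∈ Finset.range d, (1 - q ^ (2 * (s + 1)))) := by
  exact Stmt3Aux.final q hq hpoch m n
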